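/- Let S_Δ = ⋃_{i≥1} X_i be the discrete Sierpinski triangle, i.e. the discrete self-similar fractal generated by G = {(0,0),(1,0),(0,1)}. Then S_Δ = {(x,y) ∈ ℕ² | the bitwise AND of x and y equals 0}. -/

import Mathlib

/-- Two lattice points are adjacent iff they are at Euclidean distance 1
(i.e. they differ by exactly 1 in exactly one coordinate). -/
def adjPt (p q : ℕ × ℕ) : Prop :=
  (p.1 = q.1 ∧ (p.2 + 1 = q.2 ∨ q.2 + 1 = p.2)) ∨
  (p.2 = q.2 ∧ (p.1 + 1 = q.1 ∨ q.1 + 1 = p.1))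

/-- The graph with vertex set `S` and an edge between any two points at
Euclidean distance 1. -/
def gridGraph (S : Set (ℕ × ℕ)) : SimpleGraph S where
  Adj p q := adjPt p.1 q.1
  symm := by
    refine ⟨?_⟩
    rintro ⟨p, hp⟩ ⟨q, hq⟩ (⟨h1, h2⟩ | ⟨h1, h2⟩)
    · exact Or.inl ⟨h1.symm, h2.symm⟩
    · exact Or.inr ⟨h1.symm, h2.symm⟩
  loopless := by
    refine ⟨?_⟩
    rintro ⟨p, hp⟩ (⟨_, h | h⟩ | ⟨_, h | h⟩) <;> omega

/-- A set `S ⊆ ℕ²` is connected if its grid graph is connected. -/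
def IsConnectedSet (S : Set (ℕ × ℕ)) : Prop := (gridGraph S).Connected

/-- `wG G = max{x | (x,y) ∈ G} + 1`. -/
noncomputable def wG (G : Set (ℕ × ℕ)) : ℕ := sSup ((fun p => p.1) '' G) + 1

/-- `hG G = max{y | (x,y) ∈ G} + 1`. -/
noncomputable def hG (G : Set (ℕ × ℕ)) : ℕ := sSup ((fun p => p.2) '' G) + 1

/-- The rectangle `{0,…,w−1} × {0,…,h−1}`. -/
def gridBox (w h : ℕ) : Set (ℕ × ℕ) := {p | p.1 < w ∧ p.2 < h}

/-- `G` is a generator of a discrete self-similar fractal. -/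
structure IsGenerator (G : Set (ℕ × ℕ)) : Prop where
  finite : G.Finite
  zero_mem : (0, 0) ∈ G
  connected : IsConnectedSet G
  one_lt_w : 1 < wG G
  one_lt_h : 1 < hG G
  ssubset_box : G ⊂ gridBox (wG G) (hG G)

/-- The stages of the discrete self-similar fractal generated by `G`:
`X_1 = G` and `X_{i+1} = X_i + (wG^i, hG^i)·G`.  (`stage G 0` is unused.) -/
noncomputable def stage (G : Set (ℕ × ℕ)) : ℕ → Set (ℕ × ℕ)
  | 0 => ∅
  | 1 => G
  | (i + 2) => {p | ∃ a ∈ stage G (i + 1), ∃ b ∈ G,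
      p = (a.1 + wG G ^ (i + 1) * b.1, a.2 + hG G ^ (i + 1) * b.2)}

/-- The discrete self-similar fractal `F = ⋃_{i ≥ 1} X_i` generated by `G`. -/
noncomputable def fractal (G : Set (ℕ × ℕ)) : Set (ℕ × ℕ) := ⋃ i : ℕ, stage G (i + 1)

/-- The generator of the Sierpinski triangle: `{(0,0),(1,0),(0,1)}`. -/
def sierpGen : Set (ℕ × ℕ) := {(0, 0), (1, 0), (0, 1)}

private lemma land_eq_zero_iff' (x y : ℕ) :
    x &&& y = 0 ↔ ∀ j, x.testBit j = false ∨ y.testBit j = false := by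
  constructor
  · intro h j
    have := congrArg (fun z => Nat.testBit z j) h
    simp only [Nat.testBit_land, Nat.zero_testBit] at this
    rcases Bool.and_eq_false_iff.mp this with h' | h'
    · exact Or.inl h'
    · exact Or.inr h'
  · intro h
    apply Nat.zero_of_testBit_eq_false
    intro j
    rw [Nat.testBit_land]
    rcases h j with h' | h' <;> simp [h']

private lemma add_pow_land {n a c : ℕ} (hc : c < 2 ^ n)
    (h : a &&& c = 0) : (a + 2 ^ n) &&& c = 0 := by
  rw [land_eq_zero_iff'] at h ⊢
  intro j
  rcases lt_or_ge j n with hj | hj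
  · rw [Nat.add_comm, Nat.testBit_two_pow_add_gt hj]
    exact h j
  · right
    exact Nat.testBit_lt_two_pow (lt_of_lt_of_le hc (Nat.pow_le_pow_right (by norm_num) hj))

private lemma sub_pow_land {n a c : ℕ} (ha : 2 ^ n ≤ a) (ha' : a < 2 ^ (n + 1))
    (hc' : c < 2 ^ (n + 1)) (h : a &&& c = 0) :
    (a - 2 ^ n) &&& c = 0 ∧ c < 2 ^ n := by
  rw [land_eq_zero_iff'] at h
  have hmod : a - 2 ^ n = a % 2 ^ n := by
    rw [Nat.mod_eq_sub_mod ha, Nat.mod_eq_of_lt (by omega)]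
  have hta : a.testBit n = true := by
    rw [Nat.testBit_eq_decide_div_mod_eq]
    have : a / 2 ^ n = 1 := by
      have h1 : 1 ≤ a / 2 ^ n := (Nat.le_div_iff_mul_le (Nat.pow_pos (by norm_num))).mpr (by omega)
      have h2 : a / 2 ^ n < 2 := Nat.div_lt_of_lt_mul (by rw [pow_succ] at ha'; omega)
      omega
    simp [this]
  have htc : c.testBit n = false := by
    rcases h n with h' | h'
    · rw [hta] at h'; exact absurd h' (by simp)
    · exact h'
  have hclt : c < 2 ^ n := by
    rw [Nat.testBit_eq_decide_div_mod_eq] at htc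
    have h2 : c / 2 ^ n < 2 := Nat.div_lt_of_lt_mul (by rw [pow_succ] at hc'; omega)
    have h3 : c / 2 ^ n = 0 := by
      simp only [decide_eq_false_iff_not] at htc
      interval_cases h3 : (c / 2 ^ n)
      · rfl
      · simp at htc
    have e1 := Nat.div_add_mod c (2 ^ n)
    have e2 : c % 2 ^ n < 2 ^ n := Nat.mod_lt _ (Nat.pow_pos (by norm_num))
    rw [h3] at e1
    omega
  refine ⟨?_, hclt⟩
  rw [land_eq_zero_iff']
  intro j
  rw [hmod, Nat.testBit_mod_two_pow]
  rcases h j with h' | h' <;> simp [h']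

private lemma wG_sierp : wG sierpGen = 2 := by
  have him : (fun p : ℕ × ℕ => p.1) '' sierpGen = {0, 1} := by
    ext x
    simp only [sierpGen, Set.image_insert_eq, Set.image_singleton, Set.mem_insert_iff,
      Set.mem_singleton_iff]
    tauto
  rw [wG, him, csSup_pair]; rfl

private lemma hG_sierp : hG sierpGen = 2 := by
  have him : (fun p : ℕ × ℕ => p.2) '' sierpGen = {0, 1} := by
    ext y
    simp only [sierpGen, Set.image_insert_eq, Set.image_singleton, Set.mem_insert_iff,
      Set.mem_singleton_iff]
    tauto
  rw [hG, him, csSup_pair]; rfl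

private lemma stage_sierp (i : ℕ) :
    stage sierpGen (i + 1) =
      {p : ℕ × ℕ | p.1 < 2 ^ (i + 1) ∧ p.2 < 2 ^ (i + 1) ∧ p.1 &&& p.2 = 0} := by
  induction i with
  | zero =>
    ext ⟨x, y⟩
    show (x, y) ∈ sierpGen ↔ _
    simp only [sierpGen, Set.mem_insert_iff, Set.mem_singleton_iff, Set.mem_setOf_eq,
      Prod.mk.injEq, pow_one]
    constructor
    · rintro (⟨hx, hy⟩ | ⟨hx, hy⟩ | ⟨hx, hy⟩) <;> subst hx <;> subst hy <;> simp
    · rintro ⟨hx, hy, h⟩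
      interval_cases x <;> interval_cases y <;> simp_all
  | succ i ih =>
    have hn : 0 < 2 ^ (i + 1) := Nat.pow_pos (by norm_num)
    have hpow : (2:ℕ) ^ (i + 2) = 2 ^ (i + 1) + 2 ^ (i + 1) := by ring
    ext ⟨x, y⟩
    show ((x, y) ∈ {p : ℕ × ℕ | ∃ a ∈ stage sierpGen (i + 1), ∃ b ∈ sierpGen,
      p = (a.1 + wG sierpGen ^ (i + 1) * b.1, a.2 + hG sierpGen ^ (i + 1) * b.2)}) ↔ _
    simp only [ih, Set.mem_setOf_eq, wG_sierp, hG_sierp]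
    constructor
    · rintro ⟨⟨a1, a2⟩, ⟨ha1, ha2, ha⟩, ⟨b1, b2⟩, hb, hxy⟩
      simp only [Prod.mk.injEq] at hxy
      obtain ⟨hx, hy⟩ := hxy
      subst hx; subst hy
      simp only [sierpGen, Set.mem_insert_iff, Set.mem_singleton_iff] at hb
      rcases hb with hb | hb | hb <;> rw [Prod.mk.injEq] at hb <;>
          obtain ⟨h1, h2⟩ := hb <;> subst h1 <;> subst h2 <;> dsimp at *
      · exact ⟨by omega, by omega, by simpa using ha⟩
      · refine ⟨by omega, by omega, ?_⟩
        simpa [Nat.mul_one] using add_pow_land ha2 ha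
      · refine ⟨by omega, by omega, ?_⟩
        rw [Nat.land_comm]
        simp only [Nat.mul_zero, Nat.add_zero, Nat.mul_one]
        exact add_pow_land ha1 (by rwa [Nat.land_comm] at ha)
    · rintro ⟨hx, hy, h⟩
      rcases lt_or_ge x (2 ^ (i + 1)) with hx1 | hx1
      · rcases lt_or_ge y (2 ^ (i + 1)) with hy1 | hy1
        · exact ⟨(x, y), ⟨hx1, hy1, h⟩, (0, 0), by simp [sierpGen], by simp⟩
        · -- y ≥ 2^(i+1): use b = (0,1)
          obtain ⟨h0, hxlt⟩ := sub_pow_land hy1 hy hx (by rwa [Nat.land_comm] at h)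
          refine ⟨(x, y - 2 ^ (i + 1)), ⟨hxlt, by omega, by rwa [Nat.land_comm] at h0⟩,
            (0, 1), by simp [sierpGen], by simp; omega⟩
      · obtain ⟨h0, hylt⟩ := sub_pow_land hx1 hx hy h
        refine ⟨(x - 2 ^ (i + 1), y), ⟨by omega, hylt, h0⟩,
          (1, 0), by simp [sierpGen], by simp; omega⟩
/-- the discrete Sierpinski triangle is
`{(x,y) | x AND y = 0}`. -/
theorem sierpinski_fractal_eq :
    fractal sierpGen = {p : ℕ × ℕ | Nat.land p.1 p.2 = 0} := by
  ext ⟨x, y⟩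
  simp only [fractal, Set.mem_iUnion, stage_sierp, Set.mem_setOf_eq]
  constructor
  · rintro ⟨i, _, _, h⟩; exact h
  · intro h
    have h1 := Nat.lt_two_pow_self (n := x + y)
    have h2 : (2:ℕ) ^ (x + y) ≤ 2 ^ (x + y + 1) :=
      Nat.pow_le_pow_right (by norm_num) (by omega)
    exact ⟨x + y, by omega, by omega, h⟩
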